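/- Necessity of Matsumoto's condition for pure states: Let ψ ∈ ℂ^d be a unit vector, let (M_m)_{m∈Ω} be a POVM with finite outcome set Ω, let l_1,…,l_p ∈ ℂ^d, and suppose there exist real numbers ξ_m^j such that M_m^{1/2} l_j = ξ_m^j M_m^{1/2} ψ for all m ∈ Ω and all j. Then for all j,k one has ⟨l_j, l_k⟩ = Σ_{m∈Ω} ξ_m^j ξ_m^k ⟨ψ, M_m ψ⟩; in particular ⟨l_j, l_k⟩ is real for all j,k. -/

import Mathlib

open scoped BigOperators ComplexOrder

noncomputable section

namespace Matrix.PosSemidef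

/-- The positive semidefinite square root of a positive semidefinite matrix (definition of the
older Mathlib, since removed). -/
def sqrt {n : Type*} [Fintype n] [DecidableEq n] {𝕜 : Type*} [RCLike 𝕜] {A : Matrix n n 𝕜}
    (hA : A.PosSemidef) : Matrix n n 𝕜 :=
  (hA.1.eigenvectorUnitary : Matrix n n 𝕜) *
    Matrix.diagonal (fun i => ((√(hA.1.eigenvalues i) : ℝ) : 𝕜)) *
    (star hA.1.eigenvectorUnitary : Matrix n n 𝕜)

end Matrix.PosSemidef

/-- The Hermitian inner product on `Fin d → ℂ`, conjugate-linear in the first argument. -/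
def inn {d : ℕ} (x y : Fin d → ℂ) : ℂ := ∑ i, (starRingEnd ℂ) (x i) * y i

lemma psd_sqrt_mul_self_aux {n : Type*} [Fintype n] [DecidableEq n] {A : Matrix n n ℂ}
    (hA : A.PosSemidef) : hA.sqrt * hA.sqrt = A := by
  conv_rhs => rw [hA.1.spectral_theorem, Unitary.conjStarAlgAut_apply]
  unfold Matrix.PosSemidef.sqrt
  have hU : (star hA.1.eigenvectorUnitary : Matrix n n ℂ) * (hA.1.eigenvectorUnitary : Matrix n n ℂ)
      = 1 := Unitary.coe_star_mul_self _
  simp only [Matrix.mul_assoc]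
  rw [← Matrix.mul_assoc (star hA.1.eigenvectorUnitary : Matrix n n ℂ), hU, Matrix.one_mul,
    ← Matrix.mul_assoc (Matrix.diagonal _), Matrix.diagonal_mul_diagonal]
  congr 3
  funext i
  simp only [Function.comp_apply]
  rw [← RCLike.ofReal_mul, Real.mul_self_sqrt (hA.eigenvalues_nonneg i)]

lemma psd_sqrt_herm_aux {n : Type*} [Fintype n] [DecidableEq n] {A : Matrix n n ℂ}
    (hA : A.PosSemidef) : (hA.sqrt).IsHermitian := by
  unfold Matrix.PosSemidef.sqrt
  rw [Matrix.star_eq_conjTranspose]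
  apply Matrix.isHermitian_mul_mul_conjTranspose
  apply Matrix.isHermitian_diagonal_of_self_adjoint
  rw [IsSelfAdjoint]
  funext i
  simp

lemma inn_eq_dot {d : ℕ} (x y : Fin d → ℂ) : inn x y = dotProduct (star x) y := by
  simp [inn, dotProduct, Pi.star_apply]

lemma inn_herm_left {d : ℕ} (A : Matrix (Fin d) (Fin d) ℂ) (hA : A.IsHermitian)
    (x y : Fin d → ℂ) : inn (A.mulVec x) y = inn x (A.mulVec y) := by
  rw [inn_eq_dot, inn_eq_dot, Matrix.star_mulVec, ← Matrix.dotProduct_mulVec,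
    hA.eq]

/-- **Necessity of Matsumoto's condition for pure states.** -/
theorem matsumoto_necessity {d p : ℕ} {Ω : Type} [Fintype Ω]
    (ψ : Fin d → ℂ) (hψ : inn ψ ψ = 1)
    (M : Ω → Matrix (Fin d) (Fin d) ℂ)
    (hM : ∀ m, (M m).PosSemidef) (hMsum : ∑ m, M m = 1)
    (l : Fin p → (Fin d → ℂ)) (ξ : Ω → Fin p → ℝ)
    (hcond : ∀ m j, ((hM m).sqrt).mulVec (l j) = (ξ m j : ℂ) • ((hM m).sqrt).mulVec ψ) :
    (∀ j k, inn (l j) (l k) = ∑ m, (ξ m j : ℂ) * (ξ m k : ℂ) * inn ψ ((M m).mulVec ψ)) ∧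
      (∀ j k, (inn (l j) (l k)).im = 0) := by
  have key : ∀ j k, inn (l j) (l k)
      = ∑ m, (ξ m j : ℂ) * (ξ m k : ℂ) * inn ψ ((M m).mulVec ψ) := by
    intro j k
    have h1 : inn (l j) (l k) = inn (l j) ((∑ m, M m).mulVec (l k)) := by
      rw [hMsum, Matrix.one_mulVec]
    rw [h1]
    have h2 : (∑ m, M m).mulVec (l k) = ∑ m, (M m).mulVec (l k) := by
      ext i
      simp only [Matrix.mulVec, dotProduct, Finset.sum_apply, Finset.sum_fn,
        Matrix.sum_apply, Finset.sum_mul]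
      rw [Finset.sum_comm]
    rw [h2]
    have h3 : inn (l j) (∑ m, (M m).mulVec (l k)) = ∑ m, inn (l j) ((M m).mulVec (l k)) := by
      simp [inn, Finset.mul_sum, Finset.sum_apply]
      rw [Finset.sum_comm]
    rw [h3]
    refine Finset.sum_congr rfl fun m _ => ?_
    have hsq : (hM m).sqrt * (hM m).sqrt = M m := psd_sqrt_mul_self_aux (hM m)
    have hherm : ((hM m).sqrt).IsHermitian := psd_sqrt_herm_aux (hM m)
    have : (M m).mulVec (l k) = ((hM m).sqrt).mulVec (((hM m).sqrt).mulVec (l k)) := by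
      rw [Matrix.mulVec_mulVec, hsq]
    rw [this, ← inn_herm_left _ hherm, hcond m j, hcond m k]
    have hψM : (M m).mulVec ψ = ((hM m).sqrt).mulVec (((hM m).sqrt).mulVec ψ) := by
      rw [Matrix.mulVec_mulVec, hsq]
    rw [hψM, ← inn_herm_left _ hherm ψ]
    simp [inn, Finset.mul_sum, mul_comm, mul_left_comm, mul_assoc, Complex.conj_ofReal]
  refine ⟨key, fun j k => ?_⟩
  rw [key j k]
  rw [Complex.im_sum]
  refine Finset.sum_eq_zero fun m _ => ?_
  have hnn : (0:ℂ) ≤ inn ψ ((M m).mulVec ψ) := by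
    rw [inn_eq_dot]; exact (hM m).dotProduct_mulVec_nonneg ψ
  have him : (inn ψ ((M m).mulVec ψ)).im = 0 := by
    rcases (Complex.nonneg_iff.mp hnn) with ⟨_, h⟩; exact h.symm
  simp [Complex.mul_im, Complex.ofReal_im, him]
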